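/- (A posteriori error control with Lipschitz extension) In the abstract semilinear framework, suppose u is a regular solution with inf-sup constant β > 0, (H4) holds with constant Λ₄, and v_h ∈ X_h satisfies ‖u − v_h‖_{X̂} ≤ ε ≤ κβ/(‖Γ‖(1+Λ₄)) for some 0 < κ < 1. Let N̂ be the extension of N to X̂. Then, with C_rel,1 := 1/(β(1−κ)), L := ‖â‖ + 2‖Γ̂‖(‖u‖_X + ε(1+Λ₄)), C_rel,2 := 1 + L·C_rel,1, and C_eff,1 := (1+Λ₄)(‖DN(u)‖+β) + L·Λ₄: reliability ‖u − v_h‖_{X̂} ≤ C_rel,1 ‖N̂(v_h)‖_{Y*} + C_rel,2 ‖Qv_h − v_h‖_{X̂} and efficiency ‖N̂(v_h)‖_{Y*} ≤ C_eff,1 ‖u − v_h‖_{X̂} hold. -/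

import Mathlib

/-!
Statement 7 (Corollary 3.5, a posteriori error control with Lipschitz extension).
N̂(x̂) = Âx̂ − F̂ + Γ̂(x̂,x̂,·) extends N to the superspace X̂ (with fixed test space Y);
`u ∈ X` is a regular solution with inf-sup constant β > 0 for DN(u) on X×Y; `Q` satisfies
(H4) with constant Λ₄; `nΓX` is the norm ‖Γ‖ of the restriction of Γ̂ to X×X×Y
(characterised as the least bound).
-/

open Metric

set_option maxHeartbeats 1000000 in
set_option synthInstance.maxHeartbeats 400000 in
private theorem aux_apec
    {Xhat Z : Type*} [NormedAddCommGroup Xhat] [NormedSpace ℝ Xhat]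
    [NormedAddCommGroup Z] [NormedSpace ℝ Z]
    (X Xd : Submodule ℝ Xhat)
    (ahat : Xhat →L[ℝ] Z) (Fhat : Z)
    (Γhat : Xhat →L[ℝ] Xhat →L[ℝ] Z)
    (u : ↥X)
    (hu : ahat (u : Xhat) + Γhat (u : Xhat) (u : Xhat) = Fhat)          -- N(u) = 0
    (β : ℝ) (hβ : 0 < β)
    -- inf-sup condition for DN(u;·,·) on X × Y
    (hinfsup : ∀ x : ↥X, β * ‖x‖ ≤
      ‖ahat (x : Xhat) + Γhat (u : Xhat) (x : Xhat) + Γhat.flip (u : Xhat) (x : Xhat)‖)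
    -- nΓX = ‖Γ‖, the norm of the restriction of Γ̂ to X × X × Y
    (nΓX : ℝ)
    (hnΓX : IsLeast {c : ℝ | 0 ≤ c ∧
      ∀ x ξ : ↥X, ‖Γhat (x : Xhat) (ξ : Xhat)‖ ≤ c * ‖x‖ * ‖ξ‖} nΓX)
    (Q : ↥Xd →L[ℝ] ↥X) (Λ₄ : ℝ) (hΛ₄ : 0 ≤ Λ₄)
    (H4 : ∀ xh : ↥Xd,
      ‖(xh : Xhat) - ((Q xh : ↥X) : Xhat)‖ ≤ Λ₄ * infDist (xh : Xhat) (X : Set Xhat))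
    (vh : ↥Xd) (ε κ : ℝ) (hκ0 : 0 < κ) (hκ1 : κ < 1)
    (hvh : ‖(u : Xhat) - (vh : Xhat)‖ ≤ ε)
    (hε : ε ≤ κ * β / (nΓX * (1 + Λ₄))) :
    -- reliability and efficiency with the explicit constants of Corollary 3.5
    (‖(u : Xhat) - (vh : Xhat)‖ ≤
        (1 / (β * (1 - κ))) * ‖ahat (vh : Xhat) + Γhat (vh : Xhat) (vh : Xhat) - Fhat‖ +
        (1 + (‖ahat‖ + 2 * ‖Γhat‖ * (‖u‖ + ε * (1 + Λ₄))) * (1 / (β * (1 - κ)))) *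
          ‖((Q vh : ↥X) : Xhat) - (vh : Xhat)‖) ∧
    (‖ahat (vh : Xhat) + Γhat (vh : Xhat) (vh : Xhat) - Fhat‖ ≤
        ((1 + Λ₄) *
            (‖(ahat + Γhat (u : Xhat) + Γhat.flip (u : Xhat)).comp X.subtypeL‖ + β) +
          (‖ahat‖ + 2 * ‖Γhat‖ * (‖u‖ + ε * (1 + Λ₄))) * Λ₄) *
          ‖(u : Xhat) - (vh : Xhat)‖) := by
  classical
  set w : Xhat := ((Q vh : ↥X) : Xhat) with hw
  set δ : ℝ := ‖(u : Xhat) - (vh : Xhat)‖ with hδdef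
  set ρ : ℝ := ‖w - (vh : Xhat)‖ with hρdef
  set η : ℝ := ‖(u : Xhat) - w‖ with hηdef
  set R : ℝ := ‖ahat (vh : Xhat) + Γhat (vh : Xhat) (vh : Xhat) - Fhat‖ with hRdef
  set S : ℝ := ‖ahat w + Γhat w w - Fhat‖ with hSdef
  set L : ℝ := ‖ahat‖ + 2 * ‖Γhat‖ * (‖u‖ + ε * (1 + Λ₄)) with hLdef
  set Dn : ℝ := ‖(ahat + Γhat (u : Xhat) + Γhat.flip (u : Xhat)).comp X.subtypeL‖ with hDndef
  have hδ0 : (0:ℝ) ≤ δ := norm_nonneg _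
  have hρ0 : (0:ℝ) ≤ ρ := norm_nonneg _
  have hη0 : (0:ℝ) ≤ η := norm_nonneg _
  have hε0 : (0:ℝ) ≤ ε := le_trans hδ0 hvh
  have hΓ0 : (0:ℝ) ≤ nΓX := hnΓX.1.1
  have hΓop0 : (0:ℝ) ≤ ‖Γhat‖ := ContinuousLinearMap.opNorm_nonneg _
  have hucoe : ‖(u : Xhat)‖ = ‖u‖ := rfl
  -- infDist bound
  have hinf : infDist (vh : Xhat) (X : Set Xhat) ≤ δ := by
    have h := infDist_le_dist_of_mem (x := (vh : Xhat)) u.2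
    rwa [dist_eq_norm, norm_sub_rev] at h
  have hρδ : ρ ≤ Λ₄ * δ := by
    have h1 := H4 vh
    rw [hρdef, norm_sub_rev]
    exact h1.trans (mul_le_mul_of_nonneg_left hinf hΛ₄)
  have hρε : ρ ≤ Λ₄ * ε := hρδ.trans (mul_le_mul_of_nonneg_left hvh hΛ₄)
  -- η bounds
  have hηδ : η ≤ (1 + Λ₄) * δ := by
    have h : (u : Xhat) - w = ((u : Xhat) - (vh : Xhat)) + ((vh : Xhat) - w) := by abel
    have h2 : η ≤ δ + ρ := by
      rw [hηdef, h]
      calc ‖((u : Xhat) - (vh : Xhat)) + ((vh : Xhat) - w)‖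
          ≤ ‖(u : Xhat) - (vh : Xhat)‖ + ‖(vh : Xhat) - w‖ := norm_add_le _ _
        _ = δ + ρ := by rw [norm_sub_rev ((vh : Xhat)) w]
    nlinarith
  have hηε : η ≤ (1 + Λ₄) * ε := by nlinarith
  -- smallness
  have hκβ : nΓX * ((1 + Λ₄) * ε) ≤ κ * β := by
    rcases hΓ0.eq_or_lt with h0 | h0
    · rw [← h0]; simp only [zero_mul]; positivity
    · have hden : 0 < nΓX * (1 + Λ₄) := by positivity
      have := (le_div_iff₀ hden).mp hε
      nlinarith
  have hsmall : nΓX * η ≤ κ * β :=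
    le_trans (mul_le_mul_of_nonneg_left hηε hΓ0) hκβ
  -- element of X
  have hxw : ((u - Q vh : ↥X) : Xhat) = (u : Xhat) - w := rfl
  have hxwnorm : ‖(u - Q vh : ↥X)‖ = η := rfl
  -- quadratic term bound
  have hquad : ‖Γhat ((u : Xhat) - w) ((u : Xhat) - w)‖ ≤ nΓX * η * η := by
    have := hnΓX.1.2 (u - Q vh) (u - Q vh)
    rwa [hxw, hxwnorm] at this
  -- inf-sup
  have hIS : β * η ≤
      ‖ahat ((u : Xhat) - w) + Γhat (u : Xhat) ((u : Xhat) - w)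
        + Γhat.flip (u : Xhat) ((u : Xhat) - w)‖ := by
    have := hinfsup (u - Q vh)
    rwa [hxw, hxwnorm] at this
  -- identity A
  have idA : ahat ((u : Xhat) - w) + Γhat (u : Xhat) ((u : Xhat) - w)
        + Γhat.flip (u : Xhat) ((u : Xhat) - w)
      = -(ahat w + Γhat w w - Fhat) + Γhat ((u : Xhat) - w) ((u : Xhat) - w) := by
    rw [← hu]
    simp only [map_sub, ContinuousLinearMap.sub_apply, ContinuousLinearMap.flip_apply]
    abel
  have key1 : β * (1 - κ) * η ≤ S := by
    rw [idA] at hIS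
    have h1 : ‖-(ahat w + Γhat w w - Fhat) + Γhat ((u : Xhat) - w) ((u : Xhat) - w)‖
        ≤ S + nΓX * η * η := by
      calc _ ≤ ‖-(ahat w + Γhat w w - Fhat)‖ + ‖Γhat ((u : Xhat) - w) ((u : Xhat) - w)‖ :=
            norm_add_le _ _
        _ ≤ S + nΓX * η * η := by rw [norm_neg]; exact add_le_add le_rfl hquad
    nlinarith [mul_le_mul_of_nonneg_right hsmall hη0]
  -- norms of w and vh
  have hwnorm : ‖w‖ ≤ ‖u‖ + (1 + Λ₄) * ε := by
    have h : ‖w‖ ≤ ‖(u : Xhat)‖ + η := by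
      have h2 := norm_sub_le (u : Xhat) ((u : Xhat) - w)
      simpa using h2
    rw [hucoe] at h; linarith
  have hvnorm : ‖(vh : Xhat)‖ ≤ ‖u‖ + (1 + Λ₄) * ε := by
    have h : ‖(vh : Xhat)‖ ≤ ‖(u : Xhat)‖ + δ := by
      have h2 := norm_sub_le (u : Xhat) ((u : Xhat) - (vh : Xhat))
      simpa using h2
    rw [hucoe] at h; nlinarith
  -- Lipschitz estimate
  have hLip : ‖(ahat w + Γhat w w - Fhat)
        - (ahat (vh : Xhat) + Γhat (vh : Xhat) (vh : Xhat) - Fhat)‖ ≤ L * ρ := by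
    have id2 : (ahat w + Γhat w w - Fhat)
          - (ahat (vh : Xhat) + Γhat (vh : Xhat) (vh : Xhat) - Fhat)
        = ahat (w - (vh : Xhat)) + Γhat (w - (vh : Xhat)) w
          + Γhat (vh : Xhat) (w - (vh : Xhat)) := by
      simp only [map_sub, ContinuousLinearMap.sub_apply]
      abel
    rw [id2]
    have b1 : ‖ahat (w - (vh : Xhat))‖ ≤ ‖ahat‖ * ρ := ahat.le_opNorm _
    have b2 : ‖Γhat (w - (vh : Xhat)) w‖ ≤ ‖Γhat‖ * ρ * ‖w‖ := Γhat.le_opNorm₂ _ _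
    have b3 : ‖Γhat (vh : Xhat) (w - (vh : Xhat))‖ ≤ ‖Γhat‖ * ‖(vh : Xhat)‖ * ρ :=
      Γhat.le_opNorm₂ _ _
    calc ‖ahat (w - (vh : Xhat)) + Γhat (w - (vh : Xhat)) w
          + Γhat (vh : Xhat) (w - (vh : Xhat))‖
        ≤ ‖ahat (w - (vh : Xhat)) + Γhat (w - (vh : Xhat)) w‖
          + ‖Γhat (vh : Xhat) (w - (vh : Xhat))‖ := norm_add_le _ _
      _ ≤ ‖ahat (w - (vh : Xhat))‖ + ‖Γhat (w - (vh : Xhat)) w‖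
          + ‖Γhat (vh : Xhat) (w - (vh : Xhat))‖ := by
            have := norm_add_le (ahat (w - (vh : Xhat))) (Γhat (w - (vh : Xhat)) w)
            linarith
      _ ≤ L * ρ := by
            rw [hLdef]
            nlinarith [mul_le_mul_of_nonneg_left hwnorm hΓop0,
              mul_le_mul_of_nonneg_left hvnorm hΓop0]
  have hSR : S ≤ R + L * ρ := by
    have h := norm_add_le (ahat (vh : Xhat) + Γhat (vh : Xhat) (vh : Xhat) - Fhat)
      ((ahat w + Γhat w w - Fhat)
        - (ahat (vh : Xhat) + Γhat (vh : Xhat) (vh : Xhat) - Fhat))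
    simp only [add_sub_cancel] at h
    exact h.trans (by linarith)
  have hRS : R ≤ S + L * ρ := by
    have h := norm_add_le (ahat w + Γhat w w - Fhat)
      ((ahat (vh : Xhat) + Γhat (vh : Xhat) (vh : Xhat) - Fhat)
        - (ahat w + Γhat w w - Fhat))
    simp only [add_sub_cancel] at h
    have h2 : ‖(ahat (vh : Xhat) + Γhat (vh : Xhat) (vh : Xhat) - Fhat)
        - (ahat w + Γhat w w - Fhat)‖ ≤ L * ρ := by
      rw [norm_sub_rev]; exact hLip
    exact h.trans (by linarith)
  have hc : (0:ℝ) < β * (1 - κ) := by nlinarith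
  constructor
  · -- reliability
    have hηS : η ≤ S / (β * (1 - κ)) := (le_div_iff₀ hc).mpr (by nlinarith)
    have hδηρ : δ ≤ η + ρ := by
      have h : (u : Xhat) - (vh : Xhat) = ((u : Xhat) - w) + (w - (vh : Xhat)) := by abel
      rw [hδdef, h]; exact norm_add_le _ _
    have hfrac : (R + L * ρ) / (β * (1 - κ))
        = (1 / (β * (1 - κ))) * R + L * (1 / (β * (1 - κ))) * ρ := by
      field_simp
    have hSdiv : S / (β * (1 - κ)) ≤ (R + L * ρ) / (β * (1 - κ)) :=
      div_le_div_of_nonneg_right hSR hc.le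
    rw [hRdef] at *
    calc δ ≤ η + ρ := hδηρ
      _ ≤ (R + L * ρ) / (β * (1 - κ)) + ρ := by
          have := hηS.trans hSdiv
          linarith
      _ = (1 / (β * (1 - κ))) * R + (1 + L * (1 / (β * (1 - κ)))) * ρ := by
          rw [hfrac]; ring
  · -- efficiency
    have hxw2 : ((Q vh - u : ↥X) : Xhat) = w - (u : Xhat) := rfl
    have hxw2norm : ‖(Q vh - u : ↥X)‖ = ‖w - (u : Xhat)‖ := rfl
    have hDnb : ‖ahat (w - (u : Xhat)) + Γhat (u : Xhat) (w - (u : Xhat))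
        + Γhat.flip (u : Xhat) (w - (u : Xhat))‖ ≤ Dn * η := by
      have h := ((ahat + Γhat (u : Xhat) + Γhat.flip (u : Xhat)).comp X.subtypeL).le_opNorm
        (Q vh - u)
      have happ : ((ahat + Γhat (u : Xhat) + Γhat.flip (u : Xhat)).comp X.subtypeL)
          (Q vh - u) = ahat (w - (u : Xhat)) + Γhat (u : Xhat) (w - (u : Xhat))
          + Γhat.flip (u : Xhat) (w - (u : Xhat)) := by
        simp only [ContinuousLinearMap.comp_apply, Submodule.subtypeL_apply,
          ContinuousLinearMap.add_apply, hxw2]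
      have hn : ‖(Q vh - u : ↥X)‖ = η := by
        rw [hxw2norm, norm_sub_rev]
      rw [happ, hn] at h
      exact h
    have idB : ahat w + Γhat w w - Fhat
        = (ahat (w - (u : Xhat)) + Γhat (u : Xhat) (w - (u : Xhat))
            + Γhat.flip (u : Xhat) (w - (u : Xhat)))
          + Γhat (w - (u : Xhat)) (w - (u : Xhat)) := by
      rw [← hu]
      simp only [map_sub, ContinuousLinearMap.sub_apply, ContinuousLinearMap.flip_apply]
      abel
    have hquad2 : ‖Γhat (w - (u : Xhat)) (w - (u : Xhat))‖ ≤ nΓX * η * η := by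
      have := hnΓX.1.2 (Q vh - u) (Q vh - u)
      have hn : ‖(Q vh - u : ↥X)‖ = η := by rw [hxw2norm, norm_sub_rev]
      rwa [hxw2, hn] at this
    have hSeff : S ≤ (Dn + β) * η := by
      rw [hSdef, idB]
      have h := norm_add_le (ahat (w - (u : Xhat)) + Γhat (u : Xhat) (w - (u : Xhat))
            + Γhat.flip (u : Xhat) (w - (u : Xhat)))
          (Γhat (w - (u : Xhat)) (w - (u : Xhat)))
      have hq : nΓX * η * η ≤ β * η := by
        have h1 : nΓX * η * η ≤ (κ * β) * η := by
          have h1' := mul_le_mul_of_nonneg_right hsmall hη0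
          linarith only [h1']
        have h2 : (κ * β) * η ≤ β * η := by
          have hκβ' : κ * β ≤ β := by
            have := mul_le_mul_of_nonneg_right hκ1.le hβ.le
            linarith only [this]
          exact mul_le_mul_of_nonneg_right hκβ' hη0
        linarith only [h1, h2]
      linarith only [h, hDnb, hquad2, hq]
    have hDn0 : (0:ℝ) ≤ Dn := hDndef ▸ ContinuousLinearMap.opNorm_nonneg _
    have hL0 : (0:ℝ) ≤ L := by rw [hLdef]; positivity
    have hb1 : (Dn + β) * η ≤ (Dn + β) * ((1 + Λ₄) * δ) :=
      mul_le_mul_of_nonneg_left hηδ (by linarith : (0:ℝ) ≤ Dn + β)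
    have hb2 : L * ρ ≤ L * (Λ₄ * δ) := mul_le_mul_of_nonneg_left hρδ hL0
    have : R ≤ ((1 + Λ₄) * (Dn + β) + L * Λ₄) * δ := by linarith only [hRS, hSeff, hb1, hb2]
    exact this

set_option maxHeartbeats 1000000 in
set_option synthInstance.maxHeartbeats 400000 in
theorem aposteriori_error_control
    {Xhat Y : Type*} [NormedAddCommGroup Xhat] [NormedSpace ℝ Xhat]
    [NormedAddCommGroup Y] [NormedSpace ℝ Y]
    (X Xd : Submodule ℝ Xhat)
    (ahat : Xhat →L[ℝ] StrongDual ℝ Y) (Fhat : StrongDual ℝ Y)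
    (Γhat : Xhat →L[ℝ] Xhat →L[ℝ] StrongDual ℝ Y)
    (u : ↥X)
    (hu : ahat (u : Xhat) + Γhat (u : Xhat) (u : Xhat) = Fhat)          -- N(u) = 0
    (β : ℝ) (hβ : 0 < β)
    -- inf-sup condition for DN(u;·,·) on X × Y
    (hinfsup : ∀ x : ↥X, β * ‖x‖ ≤
      ‖ahat (x : Xhat) + Γhat (u : Xhat) (x : Xhat) + Γhat.flip (u : Xhat) (x : Xhat)‖)
    -- nΓX = ‖Γ‖, the norm of the restriction of Γ̂ to X × X × Y
    (nΓX : ℝ)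
    (hnΓX : IsLeast {c : ℝ | 0 ≤ c ∧
      ∀ x ξ : ↥X, ‖Γhat (x : Xhat) (ξ : Xhat)‖ ≤ c * ‖x‖ * ‖ξ‖} nΓX)
    (Q : ↥Xd →L[ℝ] ↥X) (Λ₄ : ℝ) (hΛ₄ : 0 ≤ Λ₄)
    (H4 : ∀ xh : ↥Xd,
      ‖(xh : Xhat) - ((Q xh : ↥X) : Xhat)‖ ≤ Λ₄ * infDist (xh : Xhat) (X : Set Xhat))
    (vh : ↥Xd) (ε κ : ℝ) (hκ0 : 0 < κ) (hκ1 : κ < 1)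
    (hvh : ‖(u : Xhat) - (vh : Xhat)‖ ≤ ε)
    (hε : ε ≤ κ * β / (nΓX * (1 + Λ₄))) :
    -- reliability and efficiency with the explicit constants of Corollary 3.5
    (‖(u : Xhat) - (vh : Xhat)‖ ≤
        (1 / (β * (1 - κ))) * ‖ahat (vh : Xhat) + Γhat (vh : Xhat) (vh : Xhat) - Fhat‖ +
        (1 + (‖ahat‖ + 2 * @norm _ (ContinuousLinearMap.hasOpNorm (𝕜 := ℝ) (𝕜₂ := ℝ) (σ₁₂ := RingHom.id ℝ) (E := Xhat)
          (F := Xhat →L[ℝ] StrongDual ℝ Y)) Γhat * (‖u‖ + ε * (1 + Λ₄))) * (1 / (β * (1 - κ)))) *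
          ‖((Q vh : ↥X) : Xhat) - (vh : Xhat)‖) ∧
    (‖ahat (vh : Xhat) + Γhat (vh : Xhat) (vh : Xhat) - Fhat‖ ≤
        ((1 + Λ₄) *
            (‖(ahat + Γhat (u : Xhat) + Γhat.flip (u : Xhat)).comp X.subtypeL‖ + β) +
          (‖ahat‖ + 2 * @norm _ (ContinuousLinearMap.hasOpNorm (𝕜 := ℝ) (𝕜₂ := ℝ) (σ₁₂ := RingHom.id ℝ) (E := Xhat)
          (F := Xhat →L[ℝ] StrongDual ℝ Y)) Γhat * (‖u‖ + ε * (1 + Λ₄))) * Λ₄) *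
          ‖(u : Xhat) - (vh : Xhat)‖) := by
  exact aux_apec X Xd ahat Fhat Γhat u hu β hβ hinfsup nΓX hnΓX Q Λ₄ hΛ₄ H4 vh ε κ hκ0 hκ1 hvh hε
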